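/- Let θ > 0 and Ψ_n(j) = n(n−1)⋯(n−j+1)/((n+θ−1)⋯(n+θ−j)). Then ∑_{j=1}^n Ψ_n(j)/j² → π²/6 as n → ∞. -/

import Mathlib

open Real Filter

/-- `Ψ_n(j) = n(n-1)⋯(n-j+1) / ((n+θ-1)(n+θ-2)⋯(n+θ-j))`. -/
noncomputable def Psi (θ : ℝ) (n j : ℕ) : ℝ :=
  ∏ k ∈ Finset.range j, ((n : ℝ) - k) / (θ + n - k - 1)

/-- The "diagonal" product `∏_{i<j} (i+1)/(θ'+i)` bound. -/
lemma psi_aux_prod_le (θ' : ℝ) (hθ'0 : 0 < θ') (hθ'1 : θ' ≤ 1) :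
    ∀ j : ℕ, 1 ≤ j →
      ∏ i ∈ Finset.range j, ((i : ℝ) + 1) / (θ' + i) ≤ (1 / θ') * (j : ℝ) ^ (1 - θ') := by
  intro j hj
  induction j, hj using Nat.le_induction with
  | base =>
    simp [Real.one_rpow]
  | succ j hj ih =>
    rw [Finset.prod_range_succ]
    have hj0 : (0 : ℝ) < j := by exact_mod_cast hj
    have hj1 : (0 : ℝ) < (j : ℝ) + 1 := by linarith
    have hd : (0 : ℝ) < θ' + j := by linarith
    have hfac : (0 : ℝ) ≤ ((j : ℝ) + 1) / (θ' + j) := by positivity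
    have key : (j : ℝ) ^ (1 - θ') * (((j : ℝ) + 1) / (θ' + j)) ≤ ((j : ℝ) + 1) ^ (1 - θ') := by
      -- Bernoulli: (1 + s)^p ≤ 1 + p s for 0 ≤ p ≤ 1, s = -1/(j+1)
      have hB := rpow_one_add_le_one_add_mul_self
        (s := -(1 / ((j : ℝ) + 1))) (p := 1 - θ')
        (by
          have : (1 : ℝ) / ((j : ℝ) + 1) ≤ 1 := by
            rw [div_le_one hj1]; linarith
          linarith)
        (by linarith) (by linarith)
      have h1 : (1 : ℝ) + -(1 / ((j : ℝ) + 1)) = (j : ℝ) / ((j : ℝ) + 1) := by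
        field_simp; ring
      rw [h1] at hB
      have h2 : (1 : ℝ) + (1 - θ') * -(1 / ((j : ℝ) + 1)) = (θ' + j) / ((j : ℝ) + 1) := by
        field_simp; ring
      rw [h2] at hB
      -- hB : (j/(j+1))^(1-θ') ≤ (θ'+j)/(j+1)
      have hsplit : (j : ℝ) ^ (1 - θ')
          = ((j : ℝ) / ((j : ℝ) + 1)) ^ (1 - θ') * ((j : ℝ) + 1) ^ (1 - θ') := by
        rw [← Real.mul_rpow (by positivity) (by positivity)]
        congr 1
        field_simp
      rw [hsplit]
      calc ((j : ℝ) / ((j : ℝ) + 1)) ^ (1 - θ') * ((j : ℝ) + 1) ^ (1 - θ')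
            * (((j : ℝ) + 1) / (θ' + j))
          ≤ ((θ' + j) / ((j : ℝ) + 1)) * ((j : ℝ) + 1) ^ (1 - θ')
            * (((j : ℝ) + 1) / (θ' + j)) := by
            apply mul_le_mul_of_nonneg_right _ hfac
            exact mul_le_mul_of_nonneg_right hB (Real.rpow_nonneg hj1.le _)
        _ = ((j : ℝ) + 1) ^ (1 - θ') := by
            field_simp
    calc (∏ i ∈ Finset.range j, ((i : ℝ) + 1) / (θ' + i)) * (((j : ℝ) + 1) / (θ' + j))
        ≤ (1 / θ') * (j : ℝ) ^ (1 - θ') * (((j : ℝ) + 1) / (θ' + j)) :=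
          mul_le_mul_of_nonneg_right ih hfac
      _ = (1 / θ') * ((j : ℝ) ^ (1 - θ') * (((j : ℝ) + 1) / (θ' + j))) := by ring
      _ ≤ (1 / θ') * ((j : ℝ) + 1) ^ (1 - θ') := by
          apply mul_le_mul_of_nonneg_left key (by positivity)
      _ = (1 / θ') * ((j + 1 : ℕ) : ℝ) ^ (1 - θ') := by push_cast; ring_nf

/-- Nonnegativity of `Psi` for `j ≤ n`. -/
lemma psi_nonneg {θ : ℝ} (hθ : 0 < θ) {n j : ℕ} (hjn : j ≤ n) : 0 ≤ Psi θ n j := by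
  apply Finset.prod_nonneg
  intro k hk
  rw [Finset.mem_range] at hk
  have hk' : (k : ℝ) ≤ (n : ℝ) - 1 := by
    have : k + 1 ≤ n := lt_of_lt_of_le hk hjn
    have := (Nat.cast_le (α := ℝ)).2 this
    push_cast at this; linarith
  apply div_nonneg <;> linarith

/-- Bound `Psi θ n j` by the diagonal product with `θ' = min θ 1`. -/
lemma psi_le_diag {θ : ℝ} (hθ : 0 < θ) {n j : ℕ} (hj : 1 ≤ j) (hjn : j ≤ n) :
    Psi θ n j ≤ ∏ i ∈ Finset.range j, ((i : ℝ) + 1) / (min θ 1 + i) := by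
  set θ' := min θ 1 with hθ'def
  have hθ'0 : 0 < θ' := lt_min hθ one_pos
  have hθ'1 : θ' ≤ 1 := min_le_right _ _
  have hθ'θ : θ' ≤ θ := min_le_left _ _
  have step1 : Psi θ n j ≤ ∏ k ∈ Finset.range j, ((j : ℝ) - k) / (θ' + j - k - 1) := by
    apply Finset.prod_le_prod
    · intro k hk
      rw [Finset.mem_range] at hk
      have hk' : (k : ℝ) ≤ (n : ℝ) - 1 := by
        have : k + 1 ≤ n := lt_of_lt_of_le hk hjn
        have := (Nat.cast_le (α := ℝ)).2 this
        push_cast at this; linarith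
      apply div_nonneg <;> linarith
    · intro k hk
      rw [Finset.mem_range] at hk
      have hkj : (k : ℝ) ≤ (j : ℝ) - 1 := by
        have : k + 1 ≤ j := hk
        have := (Nat.cast_le (α := ℝ)).2 this
        push_cast at this; linarith
      have hjn' : (j : ℝ) ≤ (n : ℝ) := by exact_mod_cast hjn
      have hd1 : (0 : ℝ) < θ + n - k - 1 := by linarith
      have hd2 : (0 : ℝ) < θ' + n - k - 1 := by linarith
      have hd3 : (0 : ℝ) < θ' + j - k - 1 := by linarith
      have hnum : (0 : ℝ) ≤ (n : ℝ) - k := by linarith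
      calc ((n : ℝ) - k) / (θ + n - k - 1)
          ≤ ((n : ℝ) - k) / (θ' + n - k - 1) := by
            apply div_le_div_of_nonneg_left hnum hd2; linarith
        _ ≤ ((j : ℝ) - k) / (θ' + j - k - 1) := by
            rw [div_le_div_iff₀ hd2 hd3]
            nlinarith
  refine step1.trans_eq ?_
  rw [← Finset.prod_range_reflect (fun i => ((i : ℝ) + 1) / (θ' + i)) j]
  apply Finset.prod_congr rfl
  intro k hk
  rw [Finset.mem_range] at hk
  have h1 : k + 1 ≤ j := hk
  have hcast : ((j - 1 - k : ℕ) : ℝ) = (j : ℝ) - 1 - k := by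
    have : j - 1 - k = j - (k + 1) := by omega
    rw [this, Nat.cast_sub h1]
    push_cast; ring
  rw [hcast]
  ring_nf

/-- Pointwise convergence: `Psi θ n j → 1` as `n → ∞`, for fixed `j`. -/
lemma psi_tendsto_one (θ : ℝ) (j : ℕ) :
    Tendsto (fun n : ℕ => Psi θ n j) atTop (nhds 1) := by
  have : (1 : ℝ) = ∏ _k ∈ Finset.range j, (1 : ℝ) := by simp
  rw [this]
  unfold Psi
  apply tendsto_finset_prod
  intro k _
  -- (n - k)/(θ + n - k - 1) → 1
  have hden : Tendsto (fun n : ℕ => θ + (n : ℝ) - k - 1) atTop atTop := by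
    have := tendsto_natCast_atTop_atTop (R := ℝ)
    apply tendsto_atTop_add_const_right
    apply tendsto_atTop_add_const_right
    exact tendsto_atTop_add_const_left _ _ this
  have h0 : Tendsto (fun n : ℕ => (1 - θ) / (θ + (n : ℝ) - k - 1)) atTop (nhds 0) :=
    Tendsto.div_atTop tendsto_const_nhds hden
  have h1 : Tendsto (fun n : ℕ => 1 + (1 - θ) / (θ + (n : ℝ) - k - 1)) atTop (nhds 1) := by
    have := h0.const_add 1
    simpa using this
  apply h1.congr'
  filter_upwards [hden.eventually_gt_atTop 0] with n hn
  have hne : θ + (n : ℝ) - k - 1 ≠ 0 := ne_of_gt hn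
  field_simp
  ring

theorem psi_div_sq_sum_tendsto (θ : ℝ) (hθ : 0 < θ) :
    Tendsto (fun n : ℕ => ∑ j ∈ Finset.Icc 1 n, Psi θ n j / (j : ℝ) ^ 2) atTop
      (nhds (Real.pi ^ 2 / 6)) := by
  set θ' := min θ 1 with hθ'def
  have hθ'0 : 0 < θ' := lt_min hθ one_pos
  have hθ'1 : θ' ≤ 1 := min_le_right _ _
  set f : ℕ → ℕ → ℝ := fun n j => if j ∈ Finset.Icc 1 n then Psi θ n j / (j : ℝ) ^ 2 else 0
    with hf
  have hsum_eq : ∀ n : ℕ, ∑ j ∈ Finset.Icc 1 n, Psi θ n j / (j : ℝ) ^ 2 = ∑' j : ℕ, f n j := by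
    intro n
    rw [tsum_eq_sum (s := Finset.Icc 1 n) (fun b hb => if_neg hb)]
    exact Finset.sum_congr rfl fun j hj => (if_pos hj).symm
  have hbasel : HasSum (fun n : ℕ => (1 : ℝ) / (n : ℝ) ^ 2) (π ^ 2 / 6) := hasSum_zeta_two
  simp only [funext hsum_eq]
  rw [← hbasel.tsum_eq]
  -- dominated convergence
  apply tendsto_tsum_of_dominated_convergence
    (bound := fun j : ℕ => (1 / θ') * (j : ℝ) ^ (-(1 + θ')))
  · apply Summable.mul_left
    exact Real.summable_nat_rpow.2 (by linarith)
  · intro j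
    rcases Nat.eq_zero_or_pos j with rfl | hj
    · have : ∀ n : ℕ, f n 0 = 0 := by
        intro n; simp [hf]
      simp only [this]
      simp
    · have hev : ∀ᶠ n in atTop, f n j = Psi θ n j / (j : ℝ) ^ 2 := by
        filter_upwards [eventually_ge_atTop j] with n hn
        exact if_pos (Finset.mem_Icc.2 ⟨hj, hn⟩)
      have := (psi_tendsto_one θ j).div_const ((j : ℝ) ^ 2)
      exact Tendsto.congr' (hev.mono fun n h => h.symm) this
  · filter_upwards with n
    intro j
    rcases Nat.eq_zero_or_pos j with rfl | hj
    · simp [hf]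
      positivity
    · by_cases hjn : j ∈ Finset.Icc 1 n
      · have hjn' : j ≤ n := (Finset.mem_Icc.1 hjn).2
        have hjR : (0 : ℝ) < j := by exact_mod_cast hj
        have hnonneg : 0 ≤ Psi θ n j := psi_nonneg hθ hjn'
        have hb : Psi θ n j ≤ (1 / θ') * (j : ℝ) ^ (1 - θ') :=
          (psi_le_diag hθ hj hjn').trans (psi_aux_prod_le θ' hθ'0 hθ'1 j hj)
        rw [hf]
        simp only [if_pos hjn]
        rw [Real.norm_eq_abs, abs_of_nonneg (by positivity)]
        have hpow : ((j : ℝ) ^ 2 : ℝ) = (j : ℝ) ^ ((2 : ℕ) : ℝ) := (Real.rpow_natCast _ 2).symm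
        calc Psi θ n j / (j : ℝ) ^ 2
            ≤ (1 / θ') * (j : ℝ) ^ (1 - θ') / (j : ℝ) ^ 2 := by
              apply div_le_div_of_nonneg_right hb (by positivity)
          _ = (1 / θ') * (j : ℝ) ^ (-(1 + θ')) := by
              rw [hpow, mul_div_assoc, ← Real.rpow_sub hjR]
              congr 2
              push_cast
              ring
      · rw [hf]; simp only [if_neg hjn]
        rw [norm_zero]
        positivity
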